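/- Let A, B be n×n complex positive definite matrices. For every t ∈ (0, 1): (A^{-1} ◇_t B^{-1})^{-1} ⪯ A ♮_t B and (A^{-1} ◇_t B^{-1})^{-1} ⪯ A ◇_t B in the near order, and either equality holds if and only if A = B. -/

import Mathlib

open scoped ComplexOrder Matrix

noncomputable section

/-- Real power of a (positive definite) matrix via the continuous functional calculus. -/
def mpow {n : ℕ} (A : Matrix (Fin n) (Fin n) ℂ) (t : ℝ) : Matrix (Fin n) (Fin n) ℂ :=
  cfc (fun x : ℝ => x ^ t) A

/-- The matrix logarithm of a (positive definite) matrix via the continuous functional calculus. -/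
def mlog {n : ℕ} (A : Matrix (Fin n) (Fin n) ℂ) : Matrix (Fin n) (Fin n) ℂ :=
  cfc Real.log A

/-- The metric geometric mean `A ♯ₜ B = A^{1/2} (A^{-1/2} B A^{-1/2})^t A^{1/2}`.
`A ♯ B` is `gmean A B (1/2)`. -/
def gmean {n : ℕ} (A B : Matrix (Fin n) (Fin n) ℂ) (t : ℝ) : Matrix (Fin n) (Fin n) ℂ :=
  mpow A (1/2) * mpow (mpow A (-(1/2)) * B * mpow A (-(1/2))) t * mpow A (1/2)

/-- The Loewner order: `A ≤ B` iff `B - A` is positive semidefinite. -/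
def LoewnerLE {n : ℕ} (A B : Matrix (Fin n) (Fin n) ℂ) : Prop :=
  (B - A).PosSemidef

/-- The near order: `A ⪯ B` iff `I ≤ A⁻¹ ♯ B` in the Loewner order. -/
def NearLE {n : ℕ} (A B : Matrix (Fin n) (Fin n) ℂ) : Prop :=
  LoewnerLE 1 (gmean A⁻¹ B (1/2))

/-- The spectral geometric mean `A ♮ₜ B = (A⁻¹ ♯ B)^t A (A⁻¹ ♯ B)^t`. -/
def smean {n : ℕ} (A B : Matrix (Fin n) (Fin n) ℂ) (t : ℝ) : Matrix (Fin n) (Fin n) ℂ :=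
  mpow (gmean A⁻¹ B (1/2)) t * A * mpow (gmean A⁻¹ B (1/2)) t

/-- The Wasserstein mean `A ◇ₜ B = [(1-t)I + t(A⁻¹ ♯ B)] A [(1-t)I + t(A⁻¹ ♯ B)]`. -/
def wmean {n : ℕ} (A B : Matrix (Fin n) (Fin n) ℂ) (t : ℝ) : Matrix (Fin n) (Fin n) ℂ :=
  (((1 - t : ℝ) : ℂ) • (1 : Matrix (Fin n) (Fin n) ℂ) + ((t : ℝ) : ℂ) • gmean A⁻¹ B (1/2)) * A *
    (((1 - t : ℝ) : ℂ) • (1 : Matrix (Fin n) (Fin n) ℂ) + ((t : ℝ) : ℂ) • gmean A⁻¹ B (1/2))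

/-- The arithmetic mean `A ∇ₜ B = (1-t)A + tB`. -/
def amean {n : ℕ} (A B : Matrix (Fin n) (Fin n) ℂ) (t : ℝ) : Matrix (Fin n) (Fin n) ℂ :=
  ((1 - t : ℝ) : ℂ) • A + ((t : ℝ) : ℂ) • B

/-- The matrix absolute value `|X| = (XᴴX)^{1/2}`. -/
def matAbs {n : ℕ} (X : Matrix (Fin n) (Fin n) ℂ) : Matrix (Fin n) (Fin n) ℂ :=
  mpow (Xᴴ * X) (1/2)

/-- The eigenvalues of a Hermitian matrix listed in nonincreasing order:
`eigDesc hA i` is `λ_{i+1}(A)`, so `eigDesc hA 0 = λ₁(A) ≥ eigDesc hA 1 = λ₂(A) ≥ ⋯`. -/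
def eigDesc {n : ℕ} {A : Matrix (Fin n) (Fin n) ℂ} (hA : A.IsHermitian) : Fin n → ℝ :=
  fun i => (hA.eigenvalues ∘ Tuple.sort hA.eigenvalues) i.rev


section Aux

open Matrix

variable {n : ℕ}

local notation "Mat" => Matrix (Fin n) (Fin n) ℂ

lemma finContOn {s : Set ℝ} (hs : s.Finite) (f : ℝ → ℝ) : ContinuousOn f s := by
  haveI : Finite s := hs
  haveI : DiscreteTopology s := Finite.instDiscreteTopology
  rw [continuousOn_iff_continuous_restrict]
  exact continuous_of_discreteTopology

lemma contOn (M : Mat) (f : ℝ → ℝ) : ContinuousOn f (spectrum ℝ M) :=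
  finContOn M.finite_real_spectrum f

lemma specPos {C : Mat} (hC : C.PosDef) : ∀ x ∈ spectrum ℝ C, 0 < x := by
  intro x hx
  rw [hC.1.spectrum_real_eq_range_eigenvalues] at hx
  obtain ⟨i, rfl⟩ := hx
  exact hC.eigenvalues_pos i

lemma posDef_conjTranspose_mul_mul {D : Mat} (hD : D.PosDef) {B : Mat} (hB : IsUnit B.det) :
    (Bᴴ * D * B).PosDef := by
  refine ⟨Matrix.isHermitian_conjTranspose_mul_mul B hD.1, fun x hx => ?_⟩
  have hinj : Function.Injective B.mulVec :=
    Matrix.mulVec_injective_iff_isUnit.mpr ((Matrix.isUnit_iff_isUnit_det B).mpr hB)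
  exact (hD.conjTranspose_mul_mul_same hinj).2 hx

lemma posDef_mul_mul_conjTranspose {D : Mat} (hD : D.PosDef) {B : Mat} (hB : IsUnit B.det) :
    (B * D * Bᴴ).PosDef := by
  have hB' : IsUnit Bᴴ.det := by
    rw [Matrix.det_conjTranspose]
    exact hB.star
  simpa only [Matrix.conjTranspose_conjTranspose] using
    posDef_conjTranspose_mul_mul hD (B := Bᴴ) hB'

lemma cfc_posDef {C : Mat} (hC : C.IsHermitian) {f : ℝ → ℝ}
    (hf : ∀ x ∈ spectrum ℝ C, 0 < f x) : (cfc f C).PosDef := by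
  rw [hC.cfc_eq]
  unfold Matrix.IsHermitian.cfc
  have hU1 : (hC.eigenvectorUnitary : Mat) * star (hC.eigenvectorUnitary : Mat) = 1 :=
    Matrix.mem_unitaryGroup_iff.mp hC.eigenvectorUnitary.2
  have hU : IsUnit ((hC.eigenvectorUnitary : Mat)).det := by
    apply IsUnit.of_mul_eq_one (star (hC.eigenvectorUnitary : Mat)).det
    rw [← Matrix.det_mul, hU1, Matrix.det_one]
  have hd : (Matrix.diagonal (RCLike.ofReal ∘ f ∘ hC.eigenvalues) : Mat).PosDef := by
    apply Matrix.PosDef.diagonal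
    intro i
    exact RCLike.ofReal_pos.mpr <| hf _ (by
      rw [hC.spectrum_real_eq_range_eigenvalues]; exact ⟨i, rfl⟩)
  have := posDef_mul_mul_conjTranspose hd hU
  simpa [Matrix.star_eq_conjTranspose] using this

lemma cfc_posSemidef {C : Mat} (hC : C.IsHermitian) {f : ℝ → ℝ}
    (hf : ∀ x ∈ spectrum ℝ C, 0 ≤ f x) : (cfc f C).PosSemidef := by
  rw [hC.cfc_eq]
  unfold Matrix.IsHermitian.cfc
  have hd : (Matrix.diagonal (RCLike.ofReal ∘ f ∘ hC.eigenvalues) : Mat).PosSemidef := by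
    apply Matrix.PosSemidef.diagonal
    intro i
    exact RCLike.ofReal_nonneg.mpr <| hf _ (by
      rw [hC.spectrum_real_eq_range_eigenvalues]; exact ⟨i, rfl⟩)
  have := hd.mul_mul_conjTranspose_same (hC.eigenvectorUnitary : Mat)
  simpa [Matrix.star_eq_conjTranspose] using this

end Aux

section Aux2

open Matrix

variable {n : ℕ}

local notation "Mat" => Matrix (Fin n) (Fin n) ℂ

lemma mpow_isHermitian (A : Mat) (t : ℝ) : (mpow A t).IsHermitian :=
  cfc_predicate _ A

lemma mpow_posDef {A : Mat} (hA : A.PosDef) (t : ℝ) : (mpow A t).PosDef :=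
  cfc_posDef hA.1 fun x hx => Real.rpow_pos_of_pos (specPos hA x hx) t

lemma mpow_add {A : Mat} (hA : A.PosDef) (s t : ℝ) :
    mpow A s * mpow A t = mpow A (s + t) := by
  have h1 : ContinuousOn (fun x : ℝ => x ^ s) (spectrum ℝ A) := contOn A _
  have h2 : ContinuousOn (fun x : ℝ => x ^ t) (spectrum ℝ A) := contOn A _
  unfold mpow
  rw [← cfc_mul (fun x : ℝ => x ^ s) (fun x : ℝ => x ^ t) A]
  exact cfc_congr fun x hx => (Real.rpow_add (specPos hA x hx) s t).symm

lemma mpow_zero {A : Mat} (hA : A.PosDef) : mpow A 0 = 1 := by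
  have hh : A.IsHermitian := hA.1
  unfold mpow
  rw [cfc_congr (g := fun _ : ℝ => (1 : ℝ)) fun x _ => Real.rpow_zero x,
    cfc_const_one ℝ A]

lemma mpow_one {A : Mat} (hA : A.PosDef) : mpow A 1 = A := by
  have hh : A.IsHermitian := hA.1
  unfold mpow
  rw [cfc_congr (g := fun x : ℝ => x) fun x _ => Real.rpow_one x, cfc_id' ℝ A]

lemma mpow_inv_eq {A : Mat} (hA : A.PosDef) (t : ℝ) : (mpow A t)⁻¹ = mpow A (-t) := by
  apply Matrix.inv_eq_right_inv
  rw [mpow_add hA, add_neg_cancel, mpow_zero hA]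

lemma inv_eq_cfc {A : Mat} (hA : A.PosDef) : A⁻¹ = cfc (fun x : ℝ => x⁻¹) A := by
  have hh : A.IsHermitian := hA.1
  have h1 : ContinuousOn (fun x : ℝ => x) (spectrum ℝ A) := contOn A _
  have h2 : ContinuousOn (fun x : ℝ => x⁻¹) (spectrum ℝ A) := contOn A _
  apply Matrix.inv_eq_right_inv
  nth_rewrite 1 [← cfc_id' ℝ A]
  rw [← cfc_mul (fun x : ℝ => x) (fun x : ℝ => x⁻¹) A,
    cfc_congr (g := fun _ : ℝ => (1 : ℝ)) fun x hx => mul_inv_cancel₀ (specPos hA x hx).ne',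
    cfc_const_one ℝ A]

lemma cfc_inv_eq {C : Mat} (hC : C.IsHermitian) {f : ℝ → ℝ}
    (hf : ∀ x ∈ spectrum ℝ C, f x ≠ 0) :
    (cfc f C)⁻¹ = cfc (fun x : ℝ => (f x)⁻¹) C := by
  have h1 : ContinuousOn f (spectrum ℝ C) := contOn C _
  have h2 : ContinuousOn (fun x : ℝ => (f x)⁻¹) (spectrum ℝ C) := contOn C _
  apply Matrix.inv_eq_right_inv
  rw [← cfc_mul f (fun x : ℝ => (f x)⁻¹) C,
    cfc_congr (g := fun _ : ℝ => (1 : ℝ)) fun x hx => mul_inv_cancel₀ (hf x hx),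
    cfc_const_one ℝ C]

lemma mpow_matrix_inv {A : Mat} (hA : A.PosDef) (t : ℝ) : mpow A⁻¹ t = mpow A (-t) := by
  have hh : A.IsHermitian := hA.1
  have h1 : ContinuousOn (fun x : ℝ => x⁻¹) (spectrum ℝ A) := contOn A _
  have h2 : ContinuousOn (fun x : ℝ => x ^ t) ((fun x : ℝ => x⁻¹) '' spectrum ℝ A) :=
    finContOn ((Matrix.finite_real_spectrum (A := A)).image _) _
  unfold mpow
  rw [inv_eq_cfc hA, ← cfc_comp' (fun x : ℝ => x ^ t) (fun x : ℝ => x⁻¹) A]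
  exact cfc_congr fun x hx => by
    rw [Real.inv_rpow (specPos hA x hx).le, ← Real.rpow_neg (specPos hA x hx).le]

lemma mpow_sq_half {W : Mat} (hW : W.PosDef) : mpow (W * W) (1/2) = W := by
  have hh : W.IsHermitian := hW.1
  have h1 : ContinuousOn (fun x : ℝ => x) (spectrum ℝ W) := contOn W _
  have h1' : ContinuousOn (fun x : ℝ => x * x) (spectrum ℝ W) := contOn W _
  have h2 : ContinuousOn (fun x : ℝ => x ^ (1/2 : ℝ)) ((fun x : ℝ => x * x) '' spectrum ℝ W) :=
    finContOn ((Matrix.finite_real_spectrum (A := W)).image _) _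
  have h3 : W * W = cfc (fun x : ℝ => x * x) W := by
    rw [cfc_mul (fun x : ℝ => x) (fun x : ℝ => x) W, cfc_id' ℝ W]
  unfold mpow
  rw [h3, ← cfc_comp' (fun x : ℝ => x ^ (1/2 : ℝ)) (fun x : ℝ => x * x) W]
  rw [cfc_congr (g := fun x : ℝ => x) fun x hx => ?_, cfc_id' ℝ W]
  have hx := specPos hW x hx
  show (x * x) ^ (1/2 : ℝ) = x
  have hxx : x * x = x ^ (2 : ℝ) := by
    rw [show (2:ℝ) = ((2:ℕ):ℝ) by norm_num, Real.rpow_natCast]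
    ring
  rw [hxx, ← Real.rpow_mul hx.le]
  norm_num

lemma riccati {A Z : Mat} (hA : A.PosDef) (hZ : Z.PosDef) :
    gmean A⁻¹ (Z * A * Z) (1/2) = Z := by
  unfold gmean
  rw [mpow_matrix_inv hA, mpow_matrix_inv hA, neg_neg, ← mpow_inv_eq hA]
  set R := mpow A (1/2) with hR
  have hRpd : R.PosDef := mpow_posDef hA _
  have hRH : Rᴴ = R := mpow_isHermitian A _
  have hRR : R * R = A := by
    rw [hR, mpow_add hA]
    norm_num [mpow_one hA]
  have hdetR : IsUnit R.det := hRpd.det_pos.ne'.isUnit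
  have hmid : R * (Z * A * Z) * R = (R * Z * R) * (R * Z * R) := by
    simp only [← hRR, mul_assoc]
  have hW : (R * Z * R).PosDef := by
    have := posDef_mul_mul_conjTranspose hZ hdetR
    rwa [hRH] at this
  rw [hmid, mpow_sq_half hW]
  have h1 : R⁻¹ * R = 1 := Matrix.nonsing_inv_mul R hdetR
  have h2 : R * R⁻¹ = 1 := Matrix.mul_nonsing_inv R hdetR
  have hre : R⁻¹ * (R * Z * R) * R⁻¹ = R⁻¹ * R * (Z * (R * R⁻¹)) := by
    simp only [mul_assoc]
  rw [hre, h1, h2, one_mul, mul_one]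

lemma gmean_posDef_and_eq {A B : Mat} (hA : A.PosDef) (hB : B.PosDef) :
    (gmean A⁻¹ B (1/2)).PosDef ∧ gmean A⁻¹ B (1/2) * A * gmean A⁻¹ B (1/2) = B := by
  have hRpd : (mpow A (1/2)).PosDef := mpow_posDef hA _
  set R := mpow A (1/2) with hR
  have hRH : Rᴴ = R := mpow_isHermitian A _
  have hRR : R * R = A := by
    rw [hR, mpow_add hA]
    norm_num [mpow_one hA]
  have hdetR : IsUnit R.det := hRpd.det_pos.ne'.isUnit
  have h1 : R⁻¹ * R = 1 := Matrix.nonsing_inv_mul R hdetR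
  have h2 : R * R⁻¹ = 1 := Matrix.mul_nonsing_inv R hdetR
  have hRBR : (R * B * R).PosDef := by
    have := posDef_mul_mul_conjTranspose hB hdetR
    rwa [hRH] at this
  have hSpd : (mpow (R * B * R) (1/2)).PosDef := mpow_posDef hRBR _
  set S := mpow (R * B * R) (1/2) with hS
  have hSS : S * S = R * B * R := by
    rw [hS, mpow_add hRBR]
    norm_num [mpow_one hRBR]
  have hC₀ : (R⁻¹ * S * R⁻¹).PosDef := by
    have hRinvH : (R⁻¹)ᴴ = R⁻¹ := by
      rw [Matrix.conjTranspose_nonsing_inv, hRH]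
    have hdetRinv : IsUnit (R⁻¹).det := hRpd.inv.det_pos.ne'.isUnit
    have := posDef_mul_mul_conjTranspose hSpd hdetRinv
    rwa [hRinvH] at this
  have hform : (R⁻¹ * S * R⁻¹) * A * (R⁻¹ * S * R⁻¹) = B := by
    rw [← hRR]
    calc R⁻¹ * S * R⁻¹ * (R * R) * (R⁻¹ * S * R⁻¹)
        = R⁻¹ * (S * ((R⁻¹ * R) * ((R * R⁻¹) * S))) * R⁻¹ := by simp only [mul_assoc]
      _ = R⁻¹ * (S * S) * R⁻¹ := by rw [h1, h2, one_mul, one_mul, ← mul_assoc]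
      _ = R⁻¹ * (R * B * R) * R⁻¹ := by rw [hSS]
      _ = R⁻¹ * R * (B * (R * R⁻¹)) := by simp only [mul_assoc]
      _ = B := by rw [h1, h2, one_mul, mul_one]
  have hri := riccati hA hC₀
  rw [hform] at hri
  refine ⟨?_, ?_⟩
  · rw [hri]; exact hC₀
  · rw [hri]; exact hform

end Aux2

section Aux3

lemma amgm_strict {t x : ℝ} (ht0 : 0 < t) (ht1 : t < 1) (hx : 0 < x) (hx1 : x ≠ 1) :
    x ^ t < 1 - t + t * x := by
  have h := strictConcaveOn_log_Ioi.2 (Set.mem_Ioi.mpr one_pos) (Set.mem_Ioi.mpr hx)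
    (Ne.symm hx1) (by linarith : (0:ℝ) < 1 - t) ht0 (by ring)
  simp only [smul_eq_mul, Real.log_one, mul_zero, zero_add, mul_one] at h
  have hpos : 0 < 1 - t + t * x := by nlinarith
  have hlog : Real.log (x ^ t) < Real.log (1 - t + t * x) := by
    rwa [Real.log_rpow hx]
  exact (Real.log_lt_log_iff (Real.rpow_pos_of_pos hx t) hpos).mp hlog

lemma amgm {t x : ℝ} (ht0 : 0 < t) (ht1 : t < 1) (hx : 0 < x) :
    x ^ t ≤ 1 - t + t * x := by
  rcases eq_or_ne x 1 with rfl | hx1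
  · rw [Real.one_rpow]; norm_num
  · exact (amgm_strict ht0 ht1 hx hx1).le

lemma hm_pos {t x : ℝ} (ht0 : 0 < t) (ht1 : t < 1) (hx : 0 < x) :
    0 < 1 - t + t * x⁻¹ := by
  have := mul_pos ht0 (inv_pos.mpr hx)
  linarith

lemma hm_le_gm {t x : ℝ} (ht0 : 0 < t) (ht1 : t < 1) (hx : 0 < x) :
    (1 - t + t * x⁻¹)⁻¹ ≤ x ^ t := by
  have h := amgm ht0 ht1 (inv_pos.mpr hx)
  rw [Real.inv_rpow hx.le] at h
  have hxp : 0 < x ^ t := Real.rpow_pos_of_pos hx t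
  rw [← inv_inv (x ^ t)]
  exact inv_anti₀ (inv_pos.mpr hxp) h

lemma hm_lt_gm {t x : ℝ} (ht0 : 0 < t) (ht1 : t < 1) (hx : 0 < x) (hx1 : x ≠ 1) :
    (1 - t + t * x⁻¹)⁻¹ < x ^ t := by
  have hinv1 : x⁻¹ ≠ 1 := fun h => hx1 (by rwa [inv_eq_one] at h)
  have h := amgm_strict ht0 ht1 (inv_pos.mpr hx) hinv1
  rw [Real.inv_rpow hx.le] at h
  have hxp : 0 < x ^ t := Real.rpow_pos_of_pos hx t
  rw [← inv_inv (x ^ t)]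
  exact inv_strictAnti₀ (inv_pos.mpr hxp) h

lemma hm_lt_am {t x : ℝ} (ht0 : 0 < t) (ht1 : t < 1) (hx : 0 < x) (hx1 : x ≠ 1) :
    (1 - t + t * x⁻¹)⁻¹ < 1 - t + t * x :=
  lt_of_lt_of_le (hm_lt_gm ht0 ht1 hx hx1) (amgm ht0 ht1 hx)

end Aux3

section Aux4

open Matrix

variable {n : ℕ}

local notation "Mat" => Matrix (Fin n) (Fin n) ℂ

lemma sandwich_posDef {A C : Mat} (hA : A.PosDef) (hC : C.PosDef) {f : ℝ → ℝ}
    (hf : ∀ x ∈ spectrum ℝ C, 0 < f x) : (cfc f C * A * cfc f C).PosDef := by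
  have hfC : (cfc f C).PosDef := cfc_posDef hC.1 hf
  have hH : (cfc f C)ᴴ = cfc f C := cfc_predicate f C
  have := posDef_mul_mul_conjTranspose hA hfC.det_pos.ne'.isUnit
  rwa [hH] at this

lemma key {A C : Mat} (hA : A.PosDef) (hC : C.PosDef) {f g : ℝ → ℝ}
    (hf : ∀ x ∈ spectrum ℝ C, 0 < f x) (hg : ∀ x ∈ spectrum ℝ C, 0 < g x) :
    gmean (cfc f C * A * cfc f C)⁻¹ (cfc g C * A * cfc g C) (1/2)
      = cfc (fun x => g x / f x) C := by
  have hh : C.IsHermitian := hC.1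
  have hcf : ContinuousOn f (spectrum ℝ C) := contOn C _
  have hcg : ContinuousOn g (spectrum ℝ C) := contOn C _
  have hcq : ContinuousOn (fun x => g x / f x) (spectrum ℝ C) := contOn C _
  have hX : (cfc f C * A * cfc f C).PosDef := sandwich_posDef hA hC hf
  have hZ : (cfc (fun x => g x / f x) C).PosDef :=
    cfc_posDef hC.1 fun x hx => div_pos (hg x hx) (hf x hx)
  have hzf : cfc (fun x => g x / f x) C * cfc f C = cfc g C := by
    rw [← cfc_mul (fun x => g x / f x) f C]
    exact cfc_congr fun x hx => div_mul_cancel₀ _ (hf x hx).ne'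
  have hfz : cfc f C * cfc (fun x => g x / f x) C = cfc g C := by
    rw [← cfc_mul f (fun x => g x / f x) C]
    exact cfc_congr fun x hx => by
      rw [mul_comm]
      exact div_mul_cancel₀ _ (hf x hx).ne'
  have hform : cfc (fun x => g x / f x) C * (cfc f C * A * cfc f C)
      * cfc (fun x => g x / f x) C = cfc g C * A * cfc g C := by
    calc cfc (fun x => g x / f x) C * (cfc f C * A * cfc f C) * cfc (fun x => g x / f x) C
        = (cfc (fun x => g x / f x) C * cfc f C) * A * (cfc f C * cfc (fun x => g x / f x) C) := by
          simp only [mul_assoc]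
      _ = cfc g C * A * cfc g C := by rw [hzf, hfz]
  rw [← hform]
  exact riccati hX hZ

lemma nearLE_cfc {A C : Mat} (hA : A.PosDef) (hC : C.PosDef) {f g : ℝ → ℝ}
    (hf : ∀ x ∈ spectrum ℝ C, 0 < f x) (hg : ∀ x ∈ spectrum ℝ C, 0 < g x)
    (hle : ∀ x ∈ spectrum ℝ C, f x ≤ g x) :
    NearLE (cfc f C * A * cfc f C) (cfc g C * A * cfc g C) := by
  unfold NearLE LoewnerLE
  rw [key hA hC hf hg]
  have hh : C.IsHermitian := hC.1
  have hcq : ContinuousOn (fun x => g x / f x) (spectrum ℝ C) := contOn C _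
  have hc1 : ContinuousOn (fun _ : ℝ => (1:ℝ)) (spectrum ℝ C) := contOn C _
  have h1 : cfc (fun x => g x / f x) C - 1 = cfc (fun x : ℝ => g x / f x - 1) C := by
    rw [cfc_sub (fun x => g x / f x) (fun _ : ℝ => (1:ℝ)) C, cfc_const_one ℝ C]
  rw [h1]
  exact cfc_posSemidef hC.1 fun x hx =>
    sub_nonneg.mpr ((one_le_div (hf x hx)).mpr (hle x hx))

lemma eq_iff_eqOn {A C : Mat} (hA : A.PosDef) (hC : C.PosDef) {f g : ℝ → ℝ}
    (hf : ∀ x ∈ spectrum ℝ C, 0 < f x) (hg : ∀ x ∈ spectrum ℝ C, 0 < g x) :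
    (cfc f C * A * cfc f C = cfc g C * A * cfc g C) ↔ (spectrum ℝ C).EqOn f g := by
  have hh : C.IsHermitian := hC.1
  have hcf : ContinuousOn f (spectrum ℝ C) := contOn C _
  have hcg : ContinuousOn g (spectrum ℝ C) := contOn C _
  have hcq : ContinuousOn (fun x => g x / f x) (spectrum ℝ C) := contOn C _
  have hc1 : ContinuousOn (fun _ : ℝ => (1:ℝ)) (spectrum ℝ C) := contOn C _
  constructor
  · intro h
    have h2 := key hA hC hf hg
    rw [h] at h2
    have hY : (cfc g C * A * cfc g C).PosDef := sandwich_posDef hA hC hg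
    have h3 : gmean (cfc g C * A * cfc g C)⁻¹ (cfc g C * A * cfc g C) (1/2) = 1 := by
      have hr := riccati hY Matrix.PosDef.one
      rwa [one_mul, mul_one] at hr
    rw [h3] at h2
    have hone : cfc (fun _ : ℝ => (1:ℝ)) C = cfc (fun x => g x / f x) C := by
      rw [cfc_const_one ℝ C]
      exact h2
    have heq := eqOn_of_cfc_eq_cfc hone
    intro x hx
    have hq : g x / f x = 1 := (heq hx).symm
    rw [div_eq_one_iff_eq (hf x hx).ne'] at hq
    exact hq.symm
  · intro h
    rw [cfc_congr h]

end Aux4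

set_option maxHeartbeats 1000000 in
/-- for `t ∈ (0,1)`, `(A⁻¹ ◇ₜ B⁻¹)⁻¹ ⪯ A ♮ₜ B` and
`(A⁻¹ ◇ₜ B⁻¹)⁻¹ ⪯ A ◇ₜ B`, with either equality iff `A = B`. -/
theorem inv_wmean_inv_near_le {n : ℕ} (A B : Matrix (Fin n) (Fin n) ℂ)
    (hA : A.PosDef) (hB : B.PosDef) :
    ∀ t : ℝ, 0 < t → t < 1 →
      NearLE (wmean A⁻¹ B⁻¹ t)⁻¹ (smean A B t) ∧
      NearLE (wmean A⁻¹ B⁻¹ t)⁻¹ (wmean A B t) ∧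
      ((wmean A⁻¹ B⁻¹ t)⁻¹ = smean A B t ↔ A = B) ∧
      ((wmean A⁻¹ B⁻¹ t)⁻¹ = wmean A B t ↔ A = B) := by
  intro t ht0 ht1
  obtain ⟨hC, hCAC⟩ := gmean_posDef_and_eq hA hB
  set C := gmean A⁻¹ B (1/2) with hCd
  have hh : C.IsHermitian := hC.1
  have hsp : ∀ x ∈ spectrum ℝ C, 0 < x := specPos hC
  -- scalar facts
  have hf₀ : ∀ x ∈ spectrum ℝ C, 0 < (fun x : ℝ => (1 - t + t * x⁻¹)⁻¹) x :=
    fun x hx => inv_pos.mpr (hm_pos ht0 ht1 (hsp x hx))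
  have hg₁ : ∀ x ∈ spectrum ℝ C, 0 < (fun x : ℝ => x ^ t) x :=
    fun x hx => Real.rpow_pos_of_pos (hsp x hx) t
  have hg₂ : ∀ x ∈ spectrum ℝ C, 0 < (fun x : ℝ => 1 - t + t * x) x := by
    intro x hx
    have := mul_pos ht0 (hsp x hx)
    show 0 < 1 - t + t * x
    linarith
  have hle₁ : ∀ x ∈ spectrum ℝ C, (fun x : ℝ => (1 - t + t * x⁻¹)⁻¹) x ≤ (fun x : ℝ => x ^ t) x :=
    fun x hx => hm_le_gm ht0 ht1 (hsp x hx)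
  have hle₂ : ∀ x ∈ spectrum ℝ C,
      (fun x : ℝ => (1 - t + t * x⁻¹)⁻¹) x ≤ (fun x : ℝ => 1 - t + t * x) x :=
    fun x hx => (hm_le_gm ht0 ht1 (hsp x hx)).trans (amgm ht0 ht1 (hsp x hx))
  -- smul facts
  have hsmul : ∀ (r : ℝ) (M : Matrix (Fin n) (Fin n) ℂ), ((r : ℂ)) • M = r • M := by
    intro r M
    rw [← Complex.coe_algebraMap, algebraMap_smul]
  -- representations
  have e₁ : smean A B t = cfc (fun x : ℝ => x ^ t) C * A * cfc (fun x : ℝ => x ^ t) C := rfl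
  have hE : ((1 - t : ℝ) : ℂ) • (1 : Matrix (Fin n) (Fin n) ℂ) + ((t : ℝ) : ℂ) • C
      = cfc (fun x : ℝ => 1 - t + t * x) C := by
    have hct : ContinuousOn (fun x : ℝ => t * x) (spectrum ℝ C) := contOn C _
    have h1 : cfc (fun x : ℝ => 1 - t + t * x) C
        = algebraMap ℝ (Matrix (Fin n) (Fin n) ℂ) (1 - t) + t • C := by
      rw [cfc_const_add (1 - t) (fun x : ℝ => t * x) C, cfc_const_mul_id t C]
    rw [h1, Algebra.algebraMap_eq_smul_one, hsmul, hsmul]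
  have e₂ : wmean A B t = cfc (fun x : ℝ => 1 - t + t * x) C * A
      * cfc (fun x : ℝ => 1 - t + t * x) C := by
    unfold wmean
    rw [← hCd, hE]
  have hCinv : gmean A⁻¹⁻¹ B⁻¹ (1/2) = C⁻¹ := by
    have h := riccati hA.inv hC.inv
    have hB' : C⁻¹ * A⁻¹ * C⁻¹ = B⁻¹ := by
      rw [← hCAC, Matrix.mul_inv_rev, Matrix.mul_inv_rev, mul_assoc]
    rw [hB'] at h
    exact h
  have hF : ((1 - t : ℝ) : ℂ) • (1 : Matrix (Fin n) (Fin n) ℂ)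
      + ((t : ℝ) : ℂ) • gmean A⁻¹⁻¹ B⁻¹ (1/2)
      = cfc (fun x : ℝ => 1 - t + t * x⁻¹) C := by
    have hcinv : ContinuousOn (fun x : ℝ => x⁻¹) (spectrum ℝ C) := contOn C _
    have hctinv : ContinuousOn (fun x : ℝ => t * x⁻¹) (spectrum ℝ C) := contOn C _
    have h1 : cfc (fun x : ℝ => 1 - t + t * x⁻¹) C
        = algebraMap ℝ (Matrix (Fin n) (Fin n) ℂ) (1 - t) + t • cfc (fun x : ℝ => x⁻¹) C := by
      rw [cfc_const_add (1 - t) (fun x : ℝ => t * x⁻¹) C, cfc_const_mul t (fun x : ℝ => x⁻¹) C]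
    rw [hCinv, inv_eq_cfc hC, h1, Algebra.algebraMap_eq_smul_one, hsmul, hsmul]
  have e₃ : (wmean A⁻¹ B⁻¹ t)⁻¹ = cfc (fun x : ℝ => (1 - t + t * x⁻¹)⁻¹) C * A
      * cfc (fun x : ℝ => (1 - t + t * x⁻¹)⁻¹) C := by
    unfold wmean
    rw [hF]
    have hdinv : (cfc (fun x : ℝ => 1 - t + t * x⁻¹) C)⁻¹
        = cfc (fun x : ℝ => (1 - t + t * x⁻¹)⁻¹) C :=
      cfc_inv_eq hC.1 fun x hx => (hm_pos ht0 ht1 (hsp x hx)).ne'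
    rw [Matrix.mul_inv_rev, Matrix.mul_inv_rev,
      Matrix.nonsing_inv_nonsing_inv A hA.det_pos.ne'.isUnit, hdinv]
    simp only [mul_assoc]
  -- equality helpers
  have hCone_of_spec : (∀ x ∈ spectrum ℝ C, x = 1) → C = 1 := by
    intro h
    calc C = cfc (fun x : ℝ => x) C := (cfc_id' ℝ C).symm
      _ = cfc (fun _ : ℝ => (1:ℝ)) C := cfc_congr h
      _ = 1 := cfc_const_one ℝ C
  have hCone_of_AB : A = B → C = 1 := by
    intro hAB
    have h1AB : (1 : Matrix (Fin n) (Fin n) ℂ) * A * 1 = B := by rw [one_mul, mul_one, hAB]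
    have hr := riccati hA Matrix.PosDef.one
    rw [h1AB] at hr
    rw [hCd]
    exact hr
  refine ⟨?_, ?_, ?_, ?_⟩
  · rw [e₃, e₁]
    exact nearLE_cfc hA hC hf₀ hg₁ hle₁
  · rw [e₃, e₂]
    exact nearLE_cfc hA hC hf₀ hg₂ hle₂
  · rw [e₃, e₁]
    constructor
    · intro h
      have heq := (eq_iff_eqOn hA hC hf₀ hg₁).mp h
      have hC1 : C = 1 := hCone_of_spec fun x hx => by
        by_contra hne
        exact absurd (heq hx) (hm_lt_gm ht0 ht1 (hsp x hx) hne).ne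
      rw [← hCAC, hC1, one_mul, mul_one]
    · intro hAB
      rw [hCone_of_AB hAB]
      simp only [cfc_apply_one]
      norm_num [Real.one_rpow]
  · rw [e₃, e₂]
    constructor
    · intro h
      have heq := (eq_iff_eqOn hA hC hf₀ hg₂).mp h
      have hC1 : C = 1 := hCone_of_spec fun x hx => by
        by_contra hne
        exact absurd (heq hx) (hm_lt_am ht0 ht1 (hsp x hx) hne).ne
      rw [← hCAC, hC1, one_mul, mul_one]
    · intro hAB
      rw [hCone_of_AB hAB]
      simp only [cfc_apply_one]
      norm_num
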